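/- Let μ_1, …, μ_m be probability measures on Polish spaces X_1, …, X_m and let γ_0 be a coupling with marginals μ_i. Given countable Borel partitions (A_i^n)_{n∈ℕ} of each X_i, the block approximation γ_δ := ∑_{n∈ℕ^m} γ_0(A_1^{n_1}×…×A_m^{n_m}) · μ_1^{n_1}⊗…⊗μ_m^{n_m}, where μ_i^n is the normalized restriction of μ_i to A_i^n (taken to be 0 if μ_i(A_i^n)=0), is a probability measure whose i-th marginal equals μ_i for every i. -/

import Mathlib

open MeasureTheory
open scoped ENNReal

/-- The normalized restriction of `μ` to `A`, taken to be `0` if `μ A = 0`. -/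
noncomputable def normRestrict {X : Type*} [MeasurableSpace X] (μ : Measure X) (A : Set X) :
    Measure X :=
  if μ A = 0 then 0 else (μ A)⁻¹ • μ.restrict A

/-- The block approximation of a coupling `γ₀`. -/
noncomputable def blockApprox {m : ℕ} {X : Fin m → Type*} [∀ i, MeasurableSpace (X i)]
    (μ : ∀ i, Measure (X i)) (γ₀ : Measure (∀ i, X i)) (A : ∀ i, ℕ → Set (X i)) :
    Measure (∀ i, X i) :=
  Measure.sum fun n : Fin m → ℕ =>
    γ₀ (Set.univ.pi fun i => A i (n i)) • Measure.pi fun i => normRestrict (μ i) (A i (n i))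

instance normRestrict.instIsFiniteMeasure {X : Type*} [MeasurableSpace X] (μ : Measure X)
    [IsFiniteMeasure μ] (A : Set X) : IsFiniteMeasure (normRestrict μ A) := by
  unfold normRestrict
  split_ifs with h
  · infer_instance
  · refine ⟨?_⟩
    rw [Measure.smul_apply, smul_eq_mul, Measure.restrict_apply_univ]
    exact ENNReal.mul_lt_top (ENNReal.inv_lt_top.2 (pos_iff_ne_zero.2 h)) (measure_lt_top μ A)

lemma normRestrict_univ {X : Type*} [MeasurableSpace X] (μ : Measure X) (A : Set X)
    (h0 : μ A ≠ 0) (htop : μ A ≠ ∞) : normRestrict μ A Set.univ = 1 := by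
  simp [normRestrict, h0, Measure.restrict_apply_univ, ENNReal.inv_mul_cancel h0 htop]

lemma smul_normRestrict {X : Type*} [MeasurableSpace X] (μ : Measure X) (A : Set X)
    (htop : μ A ≠ ∞) : μ A • normRestrict μ A = μ.restrict A := by
  unfold normRestrict
  split_ifs with h
  · rw [h, zero_smul]
    symm
    rw [← Measure.measure_univ_eq_zero, Measure.restrict_apply_univ, h]
  · rw [smul_smul, ENNReal.mul_inv_cancel h htop, one_smul]

/-- The block approximation of a coupling `γ₀ ∈ Π(μ₁,…,μ_m)` built from countable Borel
partitions of each factor is a probability measure whose `i`-th marginal is `μ i`. -/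
theorem blockApprox_isProbability_and_marginals
    {m : ℕ} {X : Fin m → Type*}
    [∀ i, TopologicalSpace (X i)] [∀ i, PolishSpace (X i)]
    [∀ i, MeasurableSpace (X i)] [∀ i, BorelSpace (X i)]
    (μ : ∀ i, Measure (X i)) [∀ i, IsProbabilityMeasure (μ i)]
    (γ₀ : Measure (∀ i, X i)) [IsProbabilityMeasure γ₀]
    (hmarg : ∀ i, Measure.map (fun x => x i) γ₀ = μ i)
    (A : ∀ i, ℕ → Set (X i))
    (hmeas : ∀ i n, MeasurableSet (A i n))
    (hdisj : ∀ i, Pairwise (Function.onFun Disjoint (A i)))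
    (hcover : ∀ i, (⋃ n, A i n) = Set.univ) :
    IsProbabilityMeasure (blockApprox μ γ₀ A) ∧
      ∀ i, Measure.map (fun x => x i) (blockApprox μ γ₀ A) = μ i := by
  classical
  set c : (Fin m → ℕ) → ℝ≥0∞ := fun n => γ₀ (Set.univ.pi fun i => A i (n i)) with hc
  -- the preimage of A i k under eval i has γ₀-measure μ i (A i k)
  have hpre : ∀ (i : Fin m) (k : ℕ), γ₀ ((fun x : ∀ j, X j => x i) ⁻¹' A i k) = μ i (A i k) := by
    intro i k
    rw [← hmarg i, Measure.map_apply (measurable_pi_apply i) (hmeas i k)]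
  -- if c n ≠ 0 then every μ i (A i (n i)) ≠ 0
  have hzero : ∀ n : Fin m → ℕ, c n ≠ 0 → ∀ i, μ i (A i (n i)) ≠ 0 := by
    intro n hn i h0
    apply hn
    exact measure_mono_null (fun x hx => hx i (Set.mem_univ i)) ((hpre i (n i)).trans h0)
  -- total mass of each pi factor measure
  have hpiuniv : ∀ n : Fin m → ℕ, c n ≠ 0 →
      (Measure.pi fun i => normRestrict (μ i) (A i (n i))) Set.univ = 1 := by
    intro n hn
    rw [Measure.pi_univ]
    refine Finset.prod_eq_one fun i _ => ?_
    exact normRestrict_univ _ _ (hzero n hn i) (measure_ne_top _ _)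
  -- the blocks are pairwise disjoint and cover everything
  have hblockmeas : ∀ n : Fin m → ℕ, MeasurableSet (Set.univ.pi fun i => A i (n i)) :=
    fun n => MeasurableSet.univ_pi fun i => hmeas i (n i)
  have hblockdisj : Pairwise (Function.onFun Disjoint fun n : Fin m → ℕ =>
      Set.univ.pi fun i => A i (n i)) := by
    intro n n' hne
    obtain ⟨i, hi⟩ := Function.ne_iff.1 hne
    exact Set.disjoint_left.2 fun x hx hx' =>
      Set.disjoint_left.1 (hdisj i hi) (hx i (Set.mem_univ i)) (hx' i (Set.mem_univ i))
  have hblockcover : (⋃ n : Fin m → ℕ, Set.univ.pi fun i => A i (n i)) = Set.univ := by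
    ext x
    simp only [Set.mem_iUnion, Set.mem_univ, iff_true]
    have h : ∀ i, ∃ k, x i ∈ A i k := fun i => Set.mem_iUnion.1 ((hcover i).symm ▸ Set.mem_univ (x i))
    choose n hn using h
    exact ⟨n, fun i _ => hn i⟩
  -- total mass
  have htotal : IsProbabilityMeasure (blockApprox μ γ₀ A) := by
    constructor
    rw [blockApprox, Measure.sum_apply _ MeasurableSet.univ]
    have : ∀ n : Fin m → ℕ,
        (c n • Measure.pi fun i => normRestrict (μ i) (A i (n i))) Set.univ = c n := by
      intro n
      by_cases hn : c n = 0
      · simp [hn]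
      · rw [Measure.smul_apply, smul_eq_mul, hpiuniv n hn, mul_one]
    rw [tsum_congr this]
    rw [← measure_iUnion hblockdisj hblockmeas, hblockcover]
    exact measure_univ
  refine ⟨htotal, fun i => ?_⟩
  -- marginals
  ext s hs
  rw [Measure.map_apply (measurable_pi_apply i) hs, blockApprox,
    Measure.sum_apply _ ((measurable_pi_apply i) hs)]
  set ν : ℕ → Measure (X i) := fun k => normRestrict (μ i) (A i k) with hν
  have hterm : ∀ n : Fin m → ℕ,
      (c n • Measure.pi fun j => normRestrict (μ j) (A j (n j)))
        ((fun x : ∀ j, X j => x i) ⁻¹' s) = c n * ν (n i) s := by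
    intro n
    by_cases hn : c n = 0
    · simp [hn]
    · rw [Measure.smul_apply, smul_eq_mul]
      congr 1
      have : (fun x : ∀ j, X j => x i) ⁻¹' s =
          Set.univ.pi (Function.update (fun j => (Set.univ : Set (X j))) i s) :=
        Set.eval_preimage
      rw [this, Measure.pi_pi]
      refine Finset.prod_eq_single_of_mem i (Finset.mem_univ i) ?_ |>.trans ?_
      · intro j _ hj
        rw [Function.update_of_ne hj]
        exact normRestrict_univ _ _ (hzero n hn j) (measure_ne_top _ _)
      · rw [Function.update_self]
  rw [tsum_congr hterm]
  -- regroup the sum along the i-th coordinate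
  set e : (∀ _ : Fin m, ℕ) ≃ ℕ × ({ j : Fin m // j ≠ i } → ℕ) :=
    Equiv.piSplitAt i (fun _ => ℕ) with he
  have hsymm_i : ∀ (k : ℕ) (r : { j : Fin m // j ≠ i } → ℕ), e.symm (k, r) i = k := by
    intro k r
    have := e.apply_symm_apply (k, r)
    exact congrArg Prod.fst this
  have hsymm_j : ∀ (k : ℕ) (r : { j : Fin m // j ≠ i } → ℕ) (j : Fin m) (hj : j ≠ i),
      e.symm (k, r) j = r ⟨j, hj⟩ := by
    intro k r j hj
    have := e.apply_symm_apply (k, r)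
    have h2 := congrArg Prod.snd this
    exact congrFun h2 ⟨j, hj⟩
  calc ∑' n : Fin m → ℕ, c n * ν (n i) s
      = ∑' p : ℕ × ({ j : Fin m // j ≠ i } → ℕ), c (e.symm p) * ν (e.symm p i) s :=
        (e.symm.tsum_eq fun n => c n * ν (n i) s).symm
    _ = ∑' k : ℕ, ∑' r : { j : Fin m // j ≠ i } → ℕ, c (e.symm (k, r)) * ν (e.symm (k, r) i) s := by
        exact ENNReal.tsum_prod (f := fun k r => c (e.symm (k, r)) * ν (e.symm (k, r) i) s)
    _ = ∑' k : ℕ, ∑' r : { j : Fin m // j ≠ i } → ℕ, c (e.symm (k, r)) * ν k s :=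
        tsum_congr fun k => tsum_congr fun r => by rw [hsymm_i k r]
    _ = ∑' k : ℕ, (∑' r : { j : Fin m // j ≠ i } → ℕ, c (e.symm (k, r))) * ν k s :=
        tsum_congr fun k => ENNReal.tsum_mul_right
    _ = ∑' k : ℕ, μ i (A i k) * ν k s := by
        refine tsum_congr fun k => ?_
        congr 1
        have hd : Pairwise (Function.onFun Disjoint fun r : { j : Fin m // j ≠ i } → ℕ =>
            Set.univ.pi fun j => A j (e.symm (k, r) j)) := by
          intro r r' hne
          obtain ⟨j, hj⟩ := Function.ne_iff.1 hne
          refine Set.disjoint_left.2 fun x hx hx' => ?_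
          have h1 : x j.1 ∈ A j.1 (e.symm (k, r) j.1) := hx j.1 (Set.mem_univ _)
          have h2 : x j.1 ∈ A j.1 (e.symm (k, r') j.1) := hx' j.1 (Set.mem_univ _)
          rw [hsymm_j k r j.1 j.2] at h1
          rw [hsymm_j k r' j.1 j.2] at h2
          exact Set.disjoint_left.1 (hdisj j.1 hj) h1 h2
        have hU : (⋃ r : { j : Fin m // j ≠ i } → ℕ,
            Set.univ.pi fun j => A j (e.symm (k, r) j)) =
            (fun x : ∀ j, X j => x i) ⁻¹' A i k := by
          ext x
          simp only [Set.mem_iUnion, Set.mem_preimage]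
          constructor
          · rintro ⟨r, hr⟩
            have h1 : x i ∈ A i (e.symm (k, r) i) := hr i (Set.mem_univ i)
            rwa [hsymm_i k r] at h1
          · intro hx
            have h : ∀ j : { j : Fin m // j ≠ i }, ∃ l, x j.1 ∈ A j.1 l := fun j =>
              Set.mem_iUnion.1 ((hcover j.1).symm ▸ Set.mem_univ (x j.1))
            choose r hr using h
            refine ⟨r, fun j _ => ?_⟩
            show x j ∈ A j (e.symm (k, r) j)
            by_cases hj : j = i
            · subst hj; rw [hsymm_i k r]; exact hx
            · rw [hsymm_j k r j hj]; exact hr ⟨j, hj⟩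
        rw [← hpre i k, ← hU, measure_iUnion hd fun r =>
          MeasurableSet.univ_pi fun j => hmeas j _]
    _ = ∑' k : ℕ, ((μ i).restrict (A i k)) s := by
        refine tsum_congr fun k => ?_
        rw [← smul_normRestrict (μ i) (A i k) (measure_ne_top _ _), Measure.smul_apply,
          smul_eq_mul]
    _ = μ i s := by
        simp_rw [Measure.restrict_apply hs]
        rw [← measure_iUnion (fun k k' hkk' => ((hdisj i hkk').inter_left' s).inter_right' s)
          (fun k => hs.inter (hmeas i k)), ← Set.inter_iUnion, hcover i, Set.inter_univ]
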